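/- In an n-dimensional Einstein like (ε)-para Sasakian manifold, the constants satisfy εa + c = 1 − n. -/
import Mathlib

/-- In an n-dimensional Einstein like (ε)-para Sasakian manifold,
`εa + c = 1 − n`. -/
theorem einstein_like_epsPS_a_c {V : Type*} [AddCommGroup V] [Module ℝ V]
    (φ : V →ₗ[ℝ] V) (ξ : V) (η : V →ₗ[ℝ] ℝ) (g : LinearMap.BilinForm ℝ V)
    (ε : ℝ) (hε : ε = 1 ∨ ε = -1) (n : ℕ)
    (hsym : ∀ X Y, g X Y = g Y X)
    (hφ2 : ∀ X, φ (φ X) = X - η X • ξ)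
    (hηξ : η ξ = 1) (hφξ : φ ξ = 0) (hηφ : ∀ X, η (φ X) = 0)
    (hmetric : ∀ X Y, g (φ X) (φ Y) = g X Y - ε * η X * η Y)
    (hgξ : ∀ X, g X ξ = ε * η X)
    -- (ε)-para Sasakian condition: (∇_X φ)Y = −g(φX, φY)ξ − ε η(Y) φ²X
    (nabla : V → V → V)
    (hPS : ∀ X Y, nabla X (φ Y) - φ (nabla X Y) = -(g (φ X) (φ Y)) • ξ - (ε * η Y) • φ (φ X))
    -- in an (ε)-para Sasakian manifold, S(X, ξ) = −(n−1) η(X)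
    (S : V → V → ℝ)
    (hSξ : ∀ X, S X ξ = -((n : ℝ) - 1) * η X)
    (a b c : ℝ)
    (hS : ∀ X Y, S X Y = a * g X Y + b * g (φ X) Y + c * η X * η Y) :
    ε * a + c = 1 - (n : ℝ) := by
  have h1 := hS ξ ξ
  rw [hSξ ξ, hgξ ξ, hφξ, hηξ] at h1
  simp at h1
  linarith
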